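/- Surrogate decomposition: for any policies π̃, π with π(a|s) > 0 everywhere, (1−γ)(J(π̃) − J(π)) = [E_{s∼d_π̃, a∼π̃}[A_π(s,a)] − E_{s∼d_π, a∼π̃}[A_π(s,a)]] + E_{s∼d_π, a∼π}[(π̃(a|s)/π(a|s)) A_π(s,a)]. -/

import Mathlib

open scoped BigOperators

/-- State transition matrix induced by policy `π`: `(Pmat P π) s s' = ∑ a, π s a * P s a s'`. -/
noncomputable def Pmat {S A : Type*} [Fintype A] (P : S → A → S → ℝ) (π : S → A → ℝ) :
    Matrix S S ℝ := fun s s' => ∑ a, π s a * P s a s'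

/-- State distribution at time `t` when starting from `p0` and following `π`. -/
noncomputable def stateDist {S A : Type*} [Fintype S] [DecidableEq S] [Fintype A]
    (P : S → A → S → ℝ) (π : S → A → ℝ) (p0 : S → ℝ) (t : ℕ) : S → ℝ :=
  (((Pmat P π).transpose) ^ t).mulVec p0

/-- Discounted state distribution `d_π(s) = (1-γ) ∑ γ^t Pr(s_t = s)`. -/
noncomputable def dDist {S A : Type*} [Fintype S] [DecidableEq S] [Fintype A]
    (P : S → A → S → ℝ) (π : S → A → ℝ) (p0 : S → ℝ) (γ : ℝ) (s : S) : ℝ :=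
  (1 - γ) * ∑' t : ℕ, γ ^ t * stateDist P π p0 t s

/-- Expected discounted return `J(π)` with initial distribution `p0`. -/
noncomputable def Jret {S A : Type*} [Fintype S] [DecidableEq S] [Fintype A]
    (P : S → A → S → ℝ) (π : S → A → ℝ) (r : S → A → ℝ) (p0 : S → ℝ) (γ : ℝ) : ℝ :=
  ∑' t : ℕ, γ ^ t * ∑ s, stateDist P π p0 t s * ∑ a, π s a * r s a

/-- Value function `V_π(s)`: return starting deterministically from `s`. -/
noncomputable def Vval {S A : Type*} [Fintype S] [Fintype A] [DecidableEq S]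
    (P : S → A → S → ℝ) (π : S → A → ℝ) (r : S → A → ℝ) (γ : ℝ) (s : S) : ℝ :=
  Jret P π r (fun s' => if s' = s then 1 else 0) γ

/-- Action-value function `Q_π(s,a)`. -/
noncomputable def Qval {S A : Type*} [Fintype S] [Fintype A] [DecidableEq S]
    (P : S → A → S → ℝ) (π : S → A → ℝ) (r : S → A → ℝ) (γ : ℝ) (s : S) (a : A) : ℝ :=
  r s a + γ * ∑ s', P s a s' * Vval P π r γ s'

/-- Advantage function `A_π(s,a) = Q_π(s,a) - V_π(s)`. -/
noncomputable def Adv {S A : Type*} [Fintype S] [Fintype A] [DecidableEq S]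
    (P : S → A → S → ℝ) (π : S → A → ℝ) (r : S → A → ℝ) (γ : ℝ) (s : S) (a : A) : ℝ :=
  Qval P π r γ s a - Vval P π r γ s

set_option linter.unusedSectionVars false

section helpers
variable {S A : Type*} [Fintype S] [Fintype A] [DecidableEq S]
variable (P : S → A → S → ℝ) (π : S → A → ℝ) (r : S → A → ℝ) (γ : ℝ)

lemma stateDist_zero (p0 : S → ℝ) : stateDist P π p0 0 = p0 := by
  simp [stateDist]

lemma stateDist_succ (p0 : S → ℝ) (t : ℕ) (s' : S) :
    stateDist P π p0 (t+1) s' = ∑ s, Pmat P π s s' * stateDist P π p0 t s := by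
  simp only [stateDist, pow_succ', ← Matrix.mulVec_mulVec]
  simp [Matrix.mulVec, dotProduct, Matrix.transpose_apply]

lemma stateDist_succ' (p0 : S → ℝ) (t : ℕ) :
    stateDist P π p0 (t+1) = stateDist P π (stateDist P π p0 1) t := by
  simp only [stateDist, pow_succ, ← Matrix.mulVec_mulVec, pow_one, pow_zero, Matrix.one_mulVec]

lemma stateDist_one (p0 : S → ℝ) (s' : S) :
    stateDist P π p0 1 s' = ∑ s, Pmat P π s s' * p0 s := by
  have := stateDist_succ P π p0 0 s'
  simpa [stateDist_zero] using this


lemma Pmat_nonneg (hP0 : ∀ s a s', 0 ≤ P s a s') (hπ0 : ∀ s a, 0 ≤ π s a) (s s' : S) :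
    0 ≤ Pmat P π s s' :=
  Finset.sum_nonneg fun a _ => mul_nonneg (hπ0 s a) (hP0 s a s')

lemma Pmat_row_sum (hP1 : ∀ s a, ∑ s', P s a s' = 1) (hπ1 : ∀ s, ∑ a, π s a = 1) (s : S) :
    ∑ s', Pmat P π s s' = 1 := by
  unfold Pmat
  rw [Finset.sum_comm]
  simp [← Finset.mul_sum, hP1, hπ1]

lemma stateDist_nonneg (hP0 : ∀ s a s', 0 ≤ P s a s') (hπ0 : ∀ s a, 0 ≤ π s a)
    (p0 : S → ℝ) (hp0 : ∀ s, 0 ≤ p0 s) (t : ℕ) (s : S) : 0 ≤ stateDist P π p0 t s := by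
  induction t generalizing s with
  | zero => simpa [stateDist_zero] using hp0 s
  | succ t ih =>
    rw [stateDist_succ]
    exact Finset.sum_nonneg fun s' _ => mul_nonneg (Pmat_nonneg P π hP0 hπ0 s' s) (ih s')

lemma stateDist_mass (hP1 : ∀ s a, ∑ s', P s a s' = 1) (hπ1 : ∀ s, ∑ a, π s a = 1)
    (p0 : S → ℝ) (hp01 : ∑ s, p0 s = 1) (t : ℕ) : ∑ s, stateDist P π p0 t s = 1 := by
  induction t with
  | zero => simpa [stateDist_zero] using hp01
  | succ t ih =>
    simp only [stateDist_succ]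
    rw [Finset.sum_comm]
    simp only [← Finset.sum_mul, Pmat_row_sum P π hP1 hπ1, one_mul, ih]

lemma abs_dot_le (d f : S → ℝ) (hd0 : ∀ s, 0 ≤ d s) (hd1 : ∑ s, d s = 1) :
    |∑ s, d s * f s| ≤ ∑ s, |f s| := by
  calc |∑ s, d s * f s| ≤ ∑ s, |d s * f s| := Finset.abs_sum_le_sum_abs _ _
    _ ≤ ∑ s, |f s| := by
        refine Finset.sum_le_sum fun s _ => ?_
        rw [abs_mul, abs_of_nonneg (hd0 s)]
        nlinarith [abs_nonneg (f s), hd0 s,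
          Finset.single_le_sum (f := d) (fun i _ => hd0 i) (Finset.mem_univ s), hd1]

lemma summable_geom_bound {γ : ℝ} (hγ0 : 0 ≤ γ) (hγ1 : γ < 1) (C : ℝ) (g : ℕ → ℝ)
    (hg : ∀ t, |g t| ≤ C) : Summable (fun t => γ ^ t * g t) := by
  refine Summable.of_norm_bounded (g := fun t => C * γ ^ t)
    ((summable_geometric_of_lt_one hγ0 hγ1).mul_left C) fun t => ?_
  rw [Real.norm_eq_abs, abs_mul, abs_of_nonneg (pow_nonneg hγ0 t)]
  calc γ ^ t * |g t| ≤ γ ^ t * C := by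
        exact mul_le_mul_of_nonneg_left (hg t) (pow_nonneg hγ0 t)
    _ = C * γ ^ t := mul_comm _ _


-- delta representation: stateDist is linear in p0
lemma stateDist_delta (p0 : S → ℝ) (t : ℕ) (s : S) :
    stateDist P π p0 t s
      = ∑ s0, p0 s0 * stateDist P π (fun s' => if s' = s0 then 1 else 0) t s := by
  simp only [stateDist, Matrix.mulVec, dotProduct, mul_ite, mul_one, mul_zero,
    Finset.sum_ite_eq', Finset.mem_univ, if_true]
  exact Finset.sum_congr rfl fun s0 _ => mul_comm _ _


lemma summable_J (hγ0 : 0 ≤ γ) (hγ1 : γ < 1)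
    (hP0 : ∀ s a s', 0 ≤ P s a s') (hP1 : ∀ s a, ∑ s', P s a s' = 1)
    (hπ0 : ∀ s a, 0 ≤ π s a) (hπ1 : ∀ s, ∑ a, π s a = 1)
    (p0 : S → ℝ) (hp0 : ∀ s, 0 ≤ p0 s) (hp01 : ∑ s, p0 s = 1) (f : S → ℝ) :
    Summable (fun t => γ ^ t * ∑ s, stateDist P π p0 t s * f s) :=
  summable_geom_bound hγ0 hγ1 (∑ s, |f s|) _ fun t =>
    abs_dot_le _ f (stateDist_nonneg P π hP0 hπ0 p0 hp0 t)
      (stateDist_mass P π hP1 hπ1 p0 hp01 t)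

lemma sum_linear_aux (c : ℝ) (w : S → ℝ) (ρ : S → S → ℝ) (R : S → ℝ) :
    c * ∑ s, (∑ s0, w s0 * ρ s0 s) * R s = ∑ s0, w s0 * (c * ∑ s, ρ s0 s * R s) := by
  simp only [Finset.sum_mul, Finset.mul_sum]
  rw [Finset.sum_comm]
  exact Finset.sum_congr rfl fun _ _ => Finset.sum_congr rfl fun _ _ => by ring

lemma Jret_eq_sum_Vval (hγ0 : 0 ≤ γ) (hγ1 : γ < 1)
    (hP0 : ∀ s a s', 0 ≤ P s a s') (hP1 : ∀ s a, ∑ s', P s a s' = 1)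
    (hπ0 : ∀ s a, 0 ≤ π s a) (hπ1 : ∀ s, ∑ a, π s a = 1) (p0 : S → ℝ) :
    Jret P π r p0 γ = ∑ s0, p0 s0 * Vval P π r γ s0 := by
  have hδ0 : ∀ s0 s : S, (0:ℝ) ≤ (fun s' => if s' = s0 then (1:ℝ) else 0) s := by
    intro s0 s; dsimp; split <;> norm_num
  have hδ1 : ∀ s0 : S, ∑ s, (fun s' => if s' = s0 then (1:ℝ) else 0) s = 1 := by
    intro s0; simp
  have hsum : ∀ s0 : S, Summable (fun t => p0 s0 * (γ ^ t *
      ∑ s, stateDist P π (fun s' => if s' = s0 then 1 else 0) t s * (∑ a, π s a * r s a))) :=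
    fun s0 => (summable_J P π γ hγ0 hγ1 hP0 hP1 hπ0 hπ1 _ (hδ0 s0) (hδ1 s0) _).mul_left _
  calc Jret P π r p0 γ
      = ∑' t : ℕ, ∑ s0, p0 s0 * (γ ^ t *
          ∑ s, stateDist P π (fun s' => if s' = s0 then 1 else 0) t s
            * (∑ a, π s a * r s a)) := by
        unfold Jret
        congr 1; funext t
        simp only [stateDist_delta P π p0 t]
        exact sum_linear_aux _ _ _ _
    _ = ∑ s0, ∑' t : ℕ, p0 s0 * (γ ^ t *
          ∑ s, stateDist P π (fun s' => if s' = s0 then 1 else 0) t s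
            * (∑ a, π s a * r s a)) := Summable.tsum_finsetSum fun s0 _ => hsum s0
    _ = ∑ s0, p0 s0 * Vval P π r γ s0 := by
        refine Finset.sum_congr rfl fun s0 _ => ?_
        rw [tsum_mul_left]; rfl


lemma Vval_bellman (hγ0 : 0 ≤ γ) (hγ1 : γ < 1)
    (hP0 : ∀ s a s', 0 ≤ P s a s') (hP1 : ∀ s a, ∑ s', P s a s' = 1)
    (hπ0 : ∀ s a, 0 ≤ π s a) (hπ1 : ∀ s, ∑ a, π s a = 1) (s : S) :
    Vval P π r γ s
      = (∑ a, π s a * r s a) + γ * ∑ s', Pmat P π s s' * Vval P π r γ s' := by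
  have hδ0 : ∀ x : S, (0:ℝ) ≤ (fun s' => if s' = s then (1:ℝ) else 0) x := fun x => by
    dsimp; split <;> norm_num
  have hδ1 : ∑ x, (fun s' => if s' = s then (1:ℝ) else 0) x = 1 := by simp
  have hsumm := summable_J P π γ hγ0 hγ1 hP0 hP1 hπ0 hπ1 _ hδ0 hδ1
    (fun s' => ∑ a, π s' a * r s' a)
  show Jret P π r _ γ = _
  unfold Jret
  rw [hsumm.tsum_eq_zero_add]
  congr 1
  · simp [stateDist_zero, ite_mul, Finset.sum_ite_eq']
  · have key : ∀ t : ℕ, γ ^ (t+1) *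
        ∑ s', stateDist P π (fun s' => if s' = s then (1:ℝ) else 0) (t+1) s'
          * (∑ a, π s' a * r s' a)
        = γ * (γ ^ t *
        ∑ s', stateDist P π
            (stateDist P π (fun s' => if s' = s then (1:ℝ) else 0) 1) t s'
          * (∑ a, π s' a * r s' a)) := by
      intro t
      rw [stateDist_succ']
      ring
    simp only [key]
    rw [tsum_mul_left]
    congr 1
    rw [show (∑' t : ℕ, γ ^ t *
        ∑ s', stateDist P π
            (stateDist P π (fun s' => if s' = s then (1:ℝ) else 0) 1) t s'
          * (∑ a, π s' a * r s' a))
        = Jret P π r (stateDist P π (fun s' => if s' = s then (1:ℝ) else 0) 1) γ from rfl,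
      Jret_eq_sum_Vval P π r γ hγ0 hγ1 hP0 hP1 hπ0 hπ1]
    refine Finset.sum_congr rfl fun s' _ => ?_
    rw [stateDist_one]
    simp [mul_ite, Finset.sum_ite_eq]

lemma sum_mu_Q (μ : S → A → ℝ) (s : S) :
    ∑ a, μ s a * Qval P π r γ s a
      = (∑ a, μ s a * r s a) + γ * ∑ s', Pmat P μ s s' * Vval P π r γ s' := by
  unfold Qval Pmat
  simp only [mul_add, Finset.sum_add_distrib]
  congr 1
  simp only [Finset.mul_sum, Finset.sum_mul]
  rw [Finset.sum_comm]
  exact Finset.sum_congr rfl fun _ _ => Finset.sum_congr rfl fun _ _ => by ring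

lemma sum_mu_Adv (μ : S → A → ℝ) (hμ1 : ∀ s, ∑ a, μ s a = 1) (s : S) :
    ∑ a, μ s a * Adv P π r γ s a
      = (∑ a, μ s a * r s a) + γ * ∑ s', Pmat P μ s s' * Vval P π r γ s'
          - Vval P π r γ s := by
  unfold Adv
  simp only [mul_sub, Finset.sum_sub_distrib, ← Finset.sum_mul, hμ1, one_mul,
    sum_mu_Q P π r γ μ s]



lemma dot_step_aux (c : ℝ) (d : S → ℝ) (M : Matrix S S ℝ) (V : S → ℝ) :
    ∑ s, d s * (c * ∑ s', M s s' * V s') = c * ∑ s', (∑ s, M s s' * d s) * V s' := by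
  simp only [Finset.mul_sum, Finset.sum_mul]
  rw [Finset.sum_comm]
  exact Finset.sum_congr rfl fun _ _ => Finset.sum_congr rfl fun _ _ => by ring

lemma pdl (πt : S → A → ℝ) (p0 : S → ℝ)
    (hγ0 : 0 ≤ γ) (hγ1 : γ < 1)
    (hP0 : ∀ s a s', 0 ≤ P s a s') (hP1 : ∀ s a, ∑ s', P s a s' = 1)
    (hπ0 : ∀ s a, 0 ≤ π s a) (hπ1 : ∀ s, ∑ a, π s a = 1)
    (hπt0 : ∀ s a, 0 ≤ πt s a) (hπt1 : ∀ s, ∑ a, πt s a = 1)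
    (hp00 : ∀ s, 0 ≤ p0 s) (hp01 : ∑ s, p0 s = 1) :
    (1 - γ) * (Jret P πt r p0 γ - Jret P π r p0 γ)
      = ∑ s, dDist P πt p0 γ s * ∑ a, πt s a * Adv P π r γ s a := by
  have hρ0 : ∀ t s, 0 ≤ stateDist P πt p0 t s :=
    fun t s => stateDist_nonneg P πt hP0 hπt0 p0 hp00 t s
  have hρ1 : ∀ t, ∑ s, stateDist P πt p0 t s = 1 :=
    fun t => stateDist_mass P πt hP1 hπt1 p0 hp01 t
  have hρle : ∀ t s, stateDist P πt p0 t s ≤ 1 := fun t s => by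
    have h := Finset.single_le_sum (f := fun s => stateDist P πt p0 t s)
      (fun i _ => hρ0 t i) (Finset.mem_univ s)
    rw [hρ1 t] at h; exact h
  have hG' : ∀ s, (∑ a, πt s a * Adv P π r γ s a)
      = (∑ a, πt s a * r s a) + γ * ∑ s', Pmat P πt s s' * Vval P π r γ s'
        - Vval P π r γ s := fun s => sum_mu_Adv P π r γ πt hπt1 s
  -- Step B: one-step expansion
  have stepB : ∀ t, ∑ s, stateDist P πt p0 t s * ∑ a, πt s a * Adv P π r γ s a
      = (∑ s, stateDist P πt p0 t s * ∑ a, πt s a * r s a)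
        + γ * (∑ s', stateDist P πt p0 (t+1) s' * Vval P π r γ s')
        - ∑ s, stateDist P πt p0 t s * Vval P π r γ s := by
    intro t
    calc ∑ s, stateDist P πt p0 t s * ∑ a, πt s a * Adv P π r γ s a
        = ∑ s, (stateDist P πt p0 t s * ∑ a, πt s a * r s a
            + stateDist P πt p0 t s * (γ * ∑ s', Pmat P πt s s' * Vval P π r γ s')
            - stateDist P πt p0 t s * Vval P π r γ s) := by
          refine Finset.sum_congr rfl fun s _ => ?_
          rw [hG' s]; ring
      _ = (∑ s, stateDist P πt p0 t s * ∑ a, πt s a * r s a)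
            + (∑ s, stateDist P πt p0 t s * (γ * ∑ s', Pmat P πt s s' * Vval P π r γ s'))
            - ∑ s, stateDist P πt p0 t s * Vval P π r γ s := by
          rw [Finset.sum_sub_distrib, Finset.sum_add_distrib]
      _ = _ := by
          rw [dot_step_aux]
          have h2 : (∑ s', (∑ s, Pmat P πt s s' * stateDist P πt p0 t s) * Vval P π r γ s')
              = ∑ s', stateDist P πt p0 (t+1) s' * Vval P π r γ s' :=
            Finset.sum_congr rfl fun s' _ => by rw [← stateDist_succ]
          rw [h2]
  -- summability facts
  have hsummand : ∀ s : S, Summable (fun t => γ ^ t *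
      (stateDist P πt p0 t s * ∑ a, πt s a * Adv P π r γ s a)) := by
    intro s
    refine summable_geom_bound hγ0 hγ1 |∑ a, πt s a * Adv P π r γ s a| _ fun t => ?_
    rw [abs_mul]
    calc |stateDist P πt p0 t s| * |∑ a, πt s a * Adv P π r γ s a|
        ≤ 1 * |∑ a, πt s a * Adv P π r γ s a| := by
          refine mul_le_mul_of_nonneg_right ?_ (abs_nonneg _)
          rw [abs_of_nonneg (hρ0 t s)]; exact hρle t s
      _ = _ := one_mul _
  have hf : Summable (fun t => γ ^ t * ∑ s, stateDist P πt p0 t s * ∑ a, πt s a * r s a) :=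
    summable_J P πt γ hγ0 hγ1 hP0 hP1 hπt0 hπt1 p0 hp00 hp01 _
  have hu : Summable (fun t => γ ^ t * ∑ s, stateDist P πt p0 t s * Vval P π r γ s) :=
    summable_J P πt γ hγ0 hγ1 hP0 hP1 hπt0 hπt1 p0 hp00 hp01 _
  have hu' : Summable (fun t => γ ^ t * ∑ s, stateDist P πt p0 (t+1) s * Vval P π r γ s) :=
    summable_geom_bound hγ0 hγ1 (∑ s, |Vval P π r γ s|) _ fun t =>
      abs_dot_le _ _ (hρ0 (t+1)) (hρ1 (t+1))
  -- Step A: swap sum and tsum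
  have stepA : ∑ s, dDist P πt p0 γ s * ∑ a, πt s a * Adv P π r γ s a
      = (1 - γ) * ∑' t : ℕ, γ ^ t *
          ∑ s, stateDist P πt p0 t s * ∑ a, πt s a * Adv P π r γ s a := by
    unfold dDist
    calc ∑ s, ((1 - γ) * ∑' t : ℕ, γ ^ t * stateDist P πt p0 t s)
          * ∑ a, πt s a * Adv P π r γ s a
        = (1 - γ) * ∑ s, ∑' t : ℕ, γ ^ t *
            (stateDist P πt p0 t s * ∑ a, πt s a * Adv P π r γ s a) := by
          rw [Finset.mul_sum]
          refine Finset.sum_congr rfl fun s _ => ?_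
          rw [mul_assoc, ← tsum_mul_right]
          congr 1
          exact tsum_congr fun t => by ring
      _ = (1 - γ) * ∑' t : ℕ, ∑ s, γ ^ t *
            (stateDist P πt p0 t s * ∑ a, πt s a * Adv P π r γ s a) := by
          rw [Summable.tsum_finsetSum fun s _ => hsummand s]
      _ = _ := by
          congr 1
          exact tsum_congr fun t => by rw [Finset.mul_sum]
  -- Step C: telescoping
  have split : (∑' t : ℕ, γ ^ t *
        ∑ s, stateDist P πt p0 t s * ∑ a, πt s a * Adv P π r γ s a)
      = Jret P πt r p0 γ - ∑ s, p0 s * Vval P π r γ s := by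
    have e1 : ∀ t : ℕ, γ ^ t *
        (∑ s, stateDist P πt p0 t s * ∑ a, πt s a * Adv P π r γ s a)
        = (γ ^ t * ∑ s, stateDist P πt p0 t s * ∑ a, πt s a * r s a)
          + γ * (γ ^ t * ∑ s, stateDist P πt p0 (t+1) s * Vval P π r γ s)
          - γ ^ t * ∑ s, stateDist P πt p0 t s * Vval P π r γ s := by
      intro t; rw [stepB t]; ring
    rw [tsum_congr e1, Summable.tsum_sub (hf.add (hu'.mul_left γ)) hu, Summable.tsum_add hf (hu'.mul_left γ),
      tsum_mul_left]
    have htail : ∑' t : ℕ, γ ^ t * ∑ s, stateDist P πt p0 t s * Vval P π r γ s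
        = (∑ s, p0 s * Vval P π r γ s)
          + γ * ∑' t : ℕ, γ ^ t * ∑ s, stateDist P πt p0 (t+1) s * Vval P π r γ s := by
      rw [hu.tsum_eq_zero_add]
      congr 1
      · simp [stateDist_zero]
      · rw [← tsum_mul_left]
        exact tsum_congr fun t => by ring
    rw [htail]
    have hJ : (∑' t : ℕ, γ ^ t * ∑ s, stateDist P πt p0 t s * ∑ a, πt s a * r s a)
        = Jret P πt r p0 γ := rfl
    rw [hJ]; ring
  rw [stepA, split, Jret_eq_sum_Vval P π r γ hγ0 hγ1 hP0 hP1 hπ0 hπ1 p0]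

end helpers

theorem surrogate_decomposition {S A : Type*}
    [Fintype S] [Fintype A] [DecidableEq S]
    (P : S → A → S → ℝ) (π πt : S → A → ℝ) (r : S → A → ℝ) (p0 : S → ℝ) (γ : ℝ)
    (hγ0 : 0 ≤ γ) (hγ1 : γ < 1)
    (hP0 : ∀ s a s', 0 ≤ P s a s') (hP1 : ∀ s a, ∑ s', P s a s' = 1)
    (hπpos : ∀ s a, 0 < π s a) (hπ1 : ∀ s, ∑ a, π s a = 1)
    (hπt0 : ∀ s a, 0 ≤ πt s a) (hπt1 : ∀ s, ∑ a, πt s a = 1)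
    (hp00 : ∀ s, 0 ≤ p0 s) (hp01 : ∑ s, p0 s = 1) :
    (1 - γ) * (Jret P πt r p0 γ - Jret P π r p0 γ) =
      ((∑ s, dDist P πt p0 γ s * ∑ a, πt s a * Adv P π r γ s a) -
        ∑ s, dDist P π p0 γ s * ∑ a, πt s a * Adv P π r γ s a) +
      ∑ s, dDist P π p0 γ s * ∑ a, π s a * (πt s a / π s a * Adv P π r γ s a) := by
  have hπ0 : ∀ s a, 0 ≤ π s a := fun s a => (hπpos s a).le
  have hthird : ∀ s : S, (∑ a, π s a * (πt s a / π s a * Adv P π r γ s a))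
      = ∑ a, πt s a * Adv P π r γ s a := by
    intro s
    refine Finset.sum_congr rfl fun a _ => ?_
    have h := (hπpos s a).ne'
    field_simp
  simp only [hthird]
  rw [pdl P π r γ πt p0 hγ0 hγ1 hP0 hP1 hπ0 hπ1 hπt0 hπt1 hp00 hp01]
  ring
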